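/- Let S = ⊕_{i∈ℤ} S_i be an epsilon-strongly ℤ-graded ring with principal component R = S_0. If R is right noetherian, then S is right noetherian. -/

import Mathlib

open Pointwise

/-- `A` is a `ℤ`-grading of the ring `S`: `S` is the internal direct sum of the
additive subgroups `A i`, and `A i * A j ⊆ A (i + j)` for all `i j : ℤ`. -/
def IsZGrading {S : Type*} [Ring S] (A : ℤ → AddSubgroup S) : Prop :=
  DirectSum.IsInternal A ∧ ∀ i j : ℤ, ∀ x ∈ A i, ∀ y ∈ A j, x * y ∈ A (i + j)

/-- The `ℤ`-grading `A` is epsilon-strong: it is symmetric (`A i * A (-i) * A i = A i`)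
and for every `i` there is `ε i ∈ A i * A (-i)` acting as a left identity on `A i`, with
`ε (-i)` acting as a right identity on `A i`.  Here `P * Q` denotes the additive subgroup
generated by products of elements of `P` and `Q`. -/
def IsEpsilonStrongZ {S : Type*} [Ring S] (A : ℤ → AddSubgroup S) : Prop :=
  (∀ i : ℤ, A i * A (-i) * A i = A i) ∧
  ∃ ε : ℤ → S, ∀ i : ℤ, ε i ∈ A i * A (-i) ∧ ∀ x ∈ A i, ε i * x = x ∧ x * ε (-i) = x

open Pointwise DirectSum

set_option synthInstance.maxHeartbeats 1000000
set_option maxHeartbeats 1000000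

namespace EpsAux

variable {S : Type*} [Ring S] {A : ℤ → AddSubgroup S}

/-- Decomposition equiv from internality. -/
noncomputable def deco (hA : DirectSum.IsInternal A) : S ≃+ ⨁ i, A i :=
  (AddEquiv.ofBijective (DirectSum.coeAddMonoidHom A) hA).symm

/-- The degree-`i` component projection. -/
noncomputable def proj (hA : DirectSum.IsInternal A) (i : ℤ) : S →+ S :=
  ((A i).subtype).comp ((DFinsupp.evalAddMonoidHom i).comp (deco hA).toAddMonoidHom)

lemma proj_apply (hA : DirectSum.IsInternal A) (i : ℤ) (x : S) :
    proj hA i x = ((deco hA x) i : S) := rfl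

lemma proj_mem (hA : DirectSum.IsInternal A) (i : ℤ) (x : S) :
    proj hA i x ∈ A i := ((deco hA x) i).2

lemma deco_of_mem (hA : DirectSum.IsInternal A) {i : ℤ} {x : S} (hx : x ∈ A i) :
    deco hA x = DirectSum.of (fun j => (A j : AddSubgroup S)) i ⟨x, hx⟩ := by
  have h1 : DirectSum.coeAddMonoidHom A (DirectSum.of (fun j => (A j : AddSubgroup S)) i ⟨x, hx⟩)
      = x := DirectSum.coeAddMonoidHom_of A i ⟨x, hx⟩
  show (AddEquiv.ofBijective (DirectSum.coeAddMonoidHom A) hA).symm x = _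
  rw [AddEquiv.symm_apply_eq]
  exact h1.symm

lemma proj_of_mem (hA : DirectSum.IsInternal A) {i : ℤ} {x : S} (hx : x ∈ A i) (j : ℤ) :
    proj hA j x = if j = i then x else 0 := by
  rw [proj_apply, deco_of_mem hA hx]
  by_cases h : j = i
  · subst h; rw [DirectSum.of_eq_same, if_pos rfl]
  · rw [DirectSum.of_eq_of_ne _ _ _ h, if_neg h, ZeroMemClass.coe_zero]

lemma exists_sum_proj (hA : DirectSum.IsInternal A) (x : S) :
    ∃ F : Finset ℤ, (∀ i ∉ F, proj hA i x = 0) ∧ ∑ i ∈ F, proj hA i x = x := by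
  classical
  refine ⟨(deco hA x).support, fun i hi => ?_, ?_⟩
  · rw [proj_apply]
    rw [DFinsupp.notMem_support_iff] at hi
    rw [hi, ZeroMemClass.coe_zero]
  · have h := DirectSum.sum_support_of (deco hA x)
    have h3 := congrArg (DirectSum.coeAddMonoidHom A) h
    rw [map_sum] at h3
    simp only [DirectSum.coeAddMonoidHom_of] at h3
    have h2 : DirectSum.coeAddMonoidHom A (deco hA x) = x :=
      (AddEquiv.ofBijective (DirectSum.coeAddMonoidHom A) hA).apply_symm_apply x
    rw [h2] at h3
    simpa [proj_apply] using h3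

end EpsAux

namespace EpsAux

variable {S : Type*} [Ring S] {A : ℤ → AddSubgroup S}

lemma proj_mul (hA : DirectSum.IsInternal A)
    (hmul : ∀ i j : ℤ, ∀ x ∈ A i, ∀ y ∈ A j, x * y ∈ A (i + j))
    {j : ℤ} {s : S} (hs : s ∈ A j) (x : S) (n : ℤ) :
    proj hA n (x * s) = proj hA (n - j) x * s := by
  classical
  obtain ⟨F, hF0, hFs⟩ := exists_sum_proj hA x
  conv_lhs => rw [← hFs]
  rw [Finset.sum_mul, map_sum]
  have hterm : ∀ i ∈ F, proj hA n (proj hA i x * s)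
      = if i = n - j then proj hA i x * s else 0 := by
    intro i _
    have hmem : proj hA i x * s ∈ A (i + j) := hmul _ _ _ (proj_mem hA i x) _ hs
    rw [proj_of_mem hA hmem]
    have hiff : (n = i + j) ↔ (i = n - j) := by omega
    by_cases h : i = n - j
    · rw [if_pos (hiff.mpr h), if_pos h]
    · rw [if_neg (fun hh => h (hiff.mp hh)), if_neg h]
  rw [Finset.sum_congr rfl hterm, Finset.sum_ite_eq' F (n - j)]
  by_cases h : n - j ∈ F
  · rw [if_pos h]
  · rw [if_neg h, hF0 _ h, zero_mul]

/-- If all components except possibly `t` vanish, then `x` is its `t`-component. -/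
lemma eq_proj_of_single (hA : DirectSum.IsInternal A) (t : ℤ) (x : S)
    (h : ∀ i : ℤ, i ≠ t → proj hA i x = 0) : x = proj hA t x := by
  classical
  obtain ⟨F, hF0, hFs⟩ := exists_sum_proj hA x
  conv_lhs => rw [← hFs]
  have hterm : ∀ i ∈ F, proj hA i x = if i = t then proj hA t x else 0 := by
    intro i _
    by_cases hi : i = t
    · rw [if_pos hi, hi]
    · rw [if_neg hi, h i hi]
  rw [Finset.sum_congr rfl hterm, Finset.sum_ite_eq' F t]
  by_cases h2 : t ∈ F
  · rw [if_pos h2]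
  · rw [if_neg h2, hF0 _ h2]

end EpsAux

namespace EpsAux

variable {S : Type*} [Ring S] {A : ℤ → AddSubgroup S}

lemma mem_A0 {R : Subring S} (hR : (R : Set S) = (A 0 : Set S)) {u : S} (hu : u ∈ R) :
    u ∈ A 0 := by
  rw [← SetLike.mem_coe, ← hR]; exact hu

lemma mem_R {R : Subring S} (hR : (R : Set S) = (A 0 : Set S)) {u : S} (hu : u ∈ A 0) :
    u ∈ R := by
  rw [← SetLike.mem_coe, hR]; exact hu

/-- The right `R`-module of "top coefficients in degree 0" of elements of `I` supported
in the window `[-m, 0]`. -/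
noncomputable def T0 (hA : DirectSum.IsInternal A)
    (hmul : ∀ i j : ℤ, ∀ x ∈ A i, ∀ y ∈ A j, x * y ∈ A (i + j))
    (R : Subring S) (hR : (R : Set S) = (A 0 : Set S)) (m : ℕ) (I : Submodule Sᵐᵒᵖ S) :
    Submodule Rᵐᵒᵖ R where
  carrier := {u | ∃ z ∈ I, (∀ i : ℤ, 0 < i → proj hA i z = 0) ∧
    (∀ i : ℤ, i < -(m : ℤ) → proj hA i z = 0) ∧ proj hA 0 z = (u : S)}
  add_mem' := by
    rintro u v ⟨z, hz, hzt, hzb, hzv⟩ ⟨w, hw, hwt, hwb, hwv⟩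
    refine ⟨z + w, add_mem hz hw, fun i hi => ?_, fun i hi => ?_, ?_⟩
    · rw [map_add, hzt i hi, hwt i hi, add_zero]
    · rw [map_add, hzb i hi, hwb i hi, add_zero]
    · rw [map_add, hzv, hwv]; rfl
  zero_mem' := ⟨0, zero_mem _, fun i _ => map_zero _, fun i _ => map_zero _, by
    rw [map_zero]; rfl⟩
  smul_mem' := by
    rintro c u ⟨z, hz, hzt, hzb, hzv⟩
    have hc0 : ((c.unop : S)) ∈ A 0 := mem_A0 hR c.unop.2
    have hmulz : ∀ i : ℤ, proj hA i (z * (c.unop : S)) = proj hA i z * (c.unop : S) := by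
      intro i
      rw [proj_mul hA hmul hc0 z i, sub_zero]
    refine ⟨z * (c.unop : S), ?_, fun i hi => ?_, fun i hi => ?_, ?_⟩
    · exact I.smul_mem (MulOpposite.op ((c.unop : S))) hz
    · rw [hmulz i, hzt i hi, zero_mul]
    · rw [hmulz i, hzb i hi, zero_mul]
    · rw [hmulz 0, hzv]; rfl

lemma T0_mono (hA : DirectSum.IsInternal A)
    (hmul : ∀ i j : ℤ, ∀ x ∈ A i, ∀ y ∈ A j, x * y ∈ A (i + j))
    (R : Subring S) (hR : (R : Set S) = (A 0 : Set S))
    {m m' : ℕ} (hm : m ≤ m') {I J : Submodule Sᵐᵒᵖ S} (hIJ : I ≤ J) :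
    T0 hA hmul R hR m I ≤ T0 hA hmul R hR m' J := by
  rintro u ⟨z, hz, hzt, hzb, hzv⟩
  exact ⟨z, hIJ hz, hzt, fun i hi => hzb i (by omega), hzv⟩

end EpsAux

namespace EpsAux

variable {S : Type*} [Ring S] {A : ℤ → AddSubgroup S}

lemma key (hA : DirectSum.IsInternal A)
    (hmul : ∀ i j : ℤ, ∀ x ∈ A i, ∀ y ∈ A j, x * y ∈ A (i + j))
    (R : Subring S) (hR : (R : Set S) = (A 0 : Set S))
    (ε : ℤ → S)
    (hε : ∀ i : ℤ, ε i ∈ A i * A (-i) ∧ ∀ x ∈ A i, ε i * x = x ∧ x * ε (-i) = x)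
    (m : ℕ) {I J : Submodule Sᵐᵒᵖ S}
    (hT : T0 hA hmul R hR m J ≤ T0 hA hmul R hR m I)
    (n : ℤ) {z : S} (hz : z ∈ J)
    (htop : ∀ i : ℤ, n < i → proj hA i z = 0)
    (hbot : ∀ i : ℤ, i < n - (m : ℤ) → proj hA i z = 0) :
    ∃ w ∈ I, (∀ i : ℤ, n < i → proj hA i w = 0) ∧
      (∀ i : ℤ, i < n - (m : ℤ) → proj hA i w = 0) ∧ proj hA n w = proj hA n z := by
  classical
  set x := proj hA n z with hxdef
  have hxA : x ∈ A n := proj_mem hA n z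
  have hxe : x * ε (-n) = x := ((hε n).2 x hxA).2
  have hmem : ε (-n) ∈ (A (-n)).toAddSubmonoid * (A n).toAddSubmonoid := by
    have h1 := (hε (-n)).1
    rw [neg_neg] at h1
    exact h1
  have main : ∀ e ∈ (A (-n)).toAddSubmonoid * (A n).toAddSubmonoid,
      ∃ w ∈ I, (∀ i : ℤ, n < i → proj hA i w = 0) ∧
        (∀ i : ℤ, i < n - (m : ℤ) → proj hA i w = 0) ∧ proj hA n w = x * e := by
    intro e he
    refine AddSubmonoid.mul_induction_on he ?_ ?_
    · intro a ha b hb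
      -- a ∈ A (-n), b ∈ A n
      have hxa : x * a ∈ A 0 := by
        have := hmul n (-n) x hxA a ha
        rwa [add_neg_cancel] at this
      have hmulza : ∀ i : ℤ, proj hA i (z * a) = proj hA (i + n) z * a := by
        intro i
        rw [proj_mul hA hmul ha z i, sub_neg_eq_add]
      have huT : (⟨x * a, mem_R hR hxa⟩ : R) ∈ T0 hA hmul R hR m J := by
        refine ⟨z * a, J.smul_mem (MulOpposite.op a) hz, fun i hi => ?_, fun i hi => ?_, ?_⟩
        · rw [hmulza i, htop (i + n) (by omega), zero_mul]
        · rw [hmulza i, hbot (i + n) (by omega), zero_mul]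
        · rw [hmulza 0, zero_add]
      obtain ⟨w0, hw0I, hw0t, hw0b, hw0v⟩ := hT huT
      have hmulwb : ∀ i : ℤ, proj hA i (w0 * b) = proj hA (i - n) w0 * b := by
        intro i
        rw [proj_mul hA hmul hb w0 i]
      refine ⟨w0 * b, I.smul_mem (MulOpposite.op b) hw0I, fun i hi => ?_, fun i hi => ?_, ?_⟩
      · rw [hmulwb i, hw0t (i - n) (by omega), zero_mul]
      · rw [hmulwb i, hw0b (i - n) (by omega), zero_mul]
      · rw [hmulwb n, sub_self, hw0v, mul_assoc]
    · rintro e₁ e₂ ⟨w₁, hw₁I, hw₁t, hw₁b, hw₁v⟩ ⟨w₂, hw₂I, hw₂t, hw₂b, hw₂v⟩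
      refine ⟨w₁ + w₂, add_mem hw₁I hw₂I, fun i hi => ?_, fun i hi => ?_, ?_⟩
      · rw [map_add, hw₁t i hi, hw₂t i hi, add_zero]
      · rw [map_add, hw₁b i hi, hw₂b i hi, add_zero]
      · rw [map_add, hw₁v, hw₂v, mul_add]
  obtain ⟨w, hwI, hwt, hwb, hwv⟩ := main (ε (-n)) hmem
  exact ⟨w, hwI, hwt, hwb, by rw [hwv, hxe]⟩

end EpsAux

namespace EpsAux

variable {S : Type*} [Ring S] {A : ℤ → AddSubgroup S}

lemma reduce (hA : DirectSum.IsInternal A)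
    (hmul : ∀ i j : ℤ, ∀ x ∈ A i, ∀ y ∈ A j, x * y ∈ A (i + j))
    (R : Subring S) (hR : (R : Set S) = (A 0 : Set S))
    (ε : ℤ → S)
    (hε : ∀ i : ℤ, ε i ∈ A i * A (-i) ∧ ∀ x ∈ A i, ε i * x = x ∧ x * ε (-i) = x)
    {I J : Submodule Sᵐᵒᵖ S} (hIJ : I ≤ J)
    (hT : ∀ m : ℕ, T0 hA hmul R hR m J ≤ T0 hA hmul R hR m I) :
    ∀ m : ℕ, ∀ t : ℤ, ∀ y ∈ J, (∀ i : ℤ, t < i → proj hA i y = 0) →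
      (∀ i : ℤ, i < t - (m : ℤ) → proj hA i y = 0) → y ∈ I := by
  intro m
  induction m with
  | zero =>
    intro t y hy ht hb
    obtain ⟨w, hwI, hwt, hwb, hwv⟩ := key hA hmul R hR ε hε 0 (hT 0) t hy ht hb
    have hy1 : y = proj hA t y :=
      eq_proj_of_single hA t y (fun i hi => by
        rcases lt_or_gt_of_ne hi with h | h
        · exact hb i (by omega)
        · exact ht i h)
    have hw1 : w = proj hA t w :=
      eq_proj_of_single hA t w (fun i hi => by
        rcases lt_or_gt_of_ne hi with h | h
        · exact hwb i (by omega)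
        · exact hwt i h)
    have : y = w := by rw [hy1, hw1, hwv]
    rwa [this]
  | succ m ih =>
    intro t y hy ht hb
    obtain ⟨w, hwI, hwt, hwb, hwv⟩ := key hA hmul R hR ε hε (m + 1) (hT (m + 1)) t hy ht hb
    have hd : y - w ∈ J := sub_mem hy (hIJ hwI)
    have hdt : ∀ i : ℤ, t - 1 < i → proj hA i (y - w) = 0 := by
      intro i hi
      rw [map_sub]
      by_cases hit : i = t
      · rw [hit, hwv, sub_self]
      · rw [ht i (by omega), hwt i (by omega), sub_zero]
    have hdb : ∀ i : ℤ, i < (t - 1) - (m : ℤ) → proj hA i (y - w) = 0 := by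
      intro i hi
      rw [map_sub, hb i (by push_cast; omega), hwb i (by push_cast; omega), sub_zero]
    have := ih (t - 1) (y - w) hd hdt hdb
    have : y = (y - w) + w := by abel
    rw [this]
    exact add_mem (ih (t - 1) (y - w) hd hdt hdb) hwI

/-- `Rᵐᵒᵖ` is linearly equivalent to `R` as an `Rᵐᵒᵖ`-module. -/
def unopEquiv (R : Type*) [Ring R] : Rᵐᵒᵖ ≃ₗ[Rᵐᵒᵖ] R where
  toFun := MulOpposite.unop
  invFun := MulOpposite.op
  map_add' _ _ := rfl
  map_smul' _ _ := rfl
  left_inv _ := rfl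
  right_inv _ := rfl

end EpsAux

open Pointwise

/-- If `S` is an epsilon-strongly `ℤ`-graded ring whose principal component `R = S_0` is
right noetherian, then `S` is right noetherian.
(A ring is right noetherian iff its multiplicative opposite is left noetherian.) -/
theorem epsilonStrongZ_right_noetherian
    {S : Type*} [Ring S] (A : ℤ → AddSubgroup S)
    (hgrading : IsZGrading A) (heps : IsEpsilonStrongZ A)
    (R : Subring S) (hR : (R : Set S) = (A 0 : Set S))
    (hRnoeth : IsNoetherianRing (↥R)ᵐᵒᵖ) :
    IsNoetherianRing Sᵐᵒᵖ := by
  classical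
  obtain ⟨hA, hmul⟩ := hgrading
  obtain ⟨-, ε, hε⟩ := heps
  haveI hRN : IsNoetherian (↥R)ᵐᵒᵖ (↥R)ᵐᵒᵖ := isNoetherianRing_iff.mp hRnoeth
  haveI hRN' : IsNoetherian (↥R)ᵐᵒᵖ (↥R) :=
    isNoetherian_of_linearEquiv (EpsAux.unopEquiv ↥R)
  have main : IsNoetherian Sᵐᵒᵖ S := by
    rw [← monotone_stabilizes_iff_noetherian]
    intro f
    set g : ℕ → ℕ → Submodule (↥R)ᵐᵒᵖ ↥R :=
      fun m k => EpsAux.T0 hA hmul R hR m (f k) with hg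
    have hgmono : ∀ {m m' k k' : ℕ}, m ≤ m' → k ≤ k' → g m k ≤ g m' k' :=
      fun hm hk => EpsAux.T0_mono hA hmul R hR hm (f.mono hk)
    have hstab : ∀ c : ℕ →o Submodule (↥R)ᵐᵒᵖ ↥R, ∃ n, ∀ k, n ≤ k → c n = c k :=
      monotone_stabilizes_iff_noetherian.mpr hRN'
    obtain ⟨N, hN⟩ := hstab ⟨fun n => g n n, fun a b hab => hgmono hab hab⟩
    choose Kf hKf using fun m : ℕ =>
      hstab ⟨fun k => g m k, fun a b hab => hgmono le_rfl hab⟩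
    change ∀ k, N ≤ k → g N N = g k k at hN
    change ∀ m k, Kf m ≤ k → g m (Kf m) = g m k at hKf
    set K := max N ((Finset.range (N + 1)).sup Kf) with hK
    have hTle : ∀ k, K ≤ k → ∀ m : ℕ, g m k ≤ g m K := by
      intro k hk m
      by_cases hm : m ≤ N
      · have hKm : Kf m ≤ K :=
          le_trans (Finset.le_sup (Finset.mem_range.mpr (by omega))) (le_max_right _ _)
        have h1 := hKf m k (le_trans hKm hk)
        have h2 := hKf m K hKm
        rw [← h2, h1]
      · push_neg at hm
        have hNK : N ≤ K := le_max_left _ _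
        calc g m k ≤ g (max m k) (max m k) := hgmono (le_max_left _ _) (le_max_right _ _)
          _ = g N N := (hN (max m k) (by omega)).symm
          _ ≤ g m K := hgmono (by omega) hNK
    refine ⟨K, fun k hk => ?_⟩
    apply le_antisymm (f.mono hk)
    intro y hy
    obtain ⟨F, hF0, -⟩ := EpsAux.exists_sum_proj hA y
    set F' : Finset ℤ := insert (0 : ℤ) F with hF'
    have hne : F'.Nonempty := ⟨0, Finset.mem_insert_self _ _⟩
    set t := F'.max' hne with htdef
    set b := F'.min' hne with hbdef
    have hbt : b ≤ t := F'.min'_le t (F'.max'_mem hne)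
    have htn : ((t - b).toNat : ℤ) = t - b := Int.toNat_of_nonneg (by omega)
    refine EpsAux.reduce hA hmul R hR ε hε (f.mono hk) (fun m => hTle k hk m)
      ((t - b).toNat) t y hy ?_ ?_
    · intro i hi
      apply hF0
      intro hiF
      have : i ≤ t := F'.le_max' i (Finset.mem_insert_of_mem hiF)
      omega
    · intro i hi
      rw [htn] at hi
      apply hF0
      intro hiF
      have : b ≤ i := F'.min'_le i (Finset.mem_insert_of_mem hiF)
      omega
  rw [isNoetherianRing_iff]
  exact isNoetherian_of_linearEquiv (EpsAux.unopEquiv S).symm
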